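/- Let f : ℝ → ℝ be continuous and bounded, and define u(x, t) = (4πt)^{-1/2} ∫_ℝ f(y) exp(-(y - x)²/(4t)) dy for t > 0. Then u is infinitely differentiable on ℝ × (0, ∞), u satisfies the heat equation ∂u/∂t = ∂²u/∂x² for all x ∈ ℝ and t > 0, and for every x ∈ ℝ one has u(x, t) → f(x) as t → 0⁺. -/

import Mathlib

open MeasureTheory Filter

namespace HeatAux

open Real Set Metric ContinuousLinearMap

/-- The heat kernel integrand with a polynomial factor. -/
noncomputable def HK (f : ℝ → ℝ) (k : ℕ) (p : ℝ × ℝ) (y : ℝ) : ℝ :=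
  f y * ((y - p.1) ^ k * Real.exp (-(y - p.1) ^ 2 / (4 * p.2)))

/-- The integral of the heat kernel integrand. -/
noncomputable def VV (f : ℝ → ℝ) (k : ℕ) (p : ℝ × ℝ) : ℝ := ∫ y : ℝ, HK f k p y

/-- The candidate Fréchet derivative of `VV f k` at `p`. -/
noncomputable def DV (f : ℝ → ℝ) (k : ℕ) (p : ℝ × ℝ) : ℝ × ℝ →L[ℝ] ℝ :=
  (ContinuousLinearMap.fst ℝ ℝ ℝ).smulRight
      (-(k : ℝ) * VV f (k - 1) p + (2 * p.2)⁻¹ * VV f (k + 1) p) +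
  (ContinuousLinearMap.snd ℝ ℝ ℝ).smulRight ((4 * p.2 ^ 2)⁻¹ * VV f (k + 2) p)

/-- The candidate Fréchet derivative of the integrand, per `y`. -/
noncomputable def DH (f : ℝ → ℝ) (k : ℕ) (p : ℝ × ℝ) (y : ℝ) : ℝ × ℝ →L[ℝ] ℝ :=
  (ContinuousLinearMap.fst ℝ ℝ ℝ).smulRight
      (-(k : ℝ) * HK f (k - 1) p y + (2 * p.2)⁻¹ * HK f (k + 1) p y) +
  (ContinuousLinearMap.snd ℝ ℝ ℝ).smulRight ((4 * p.2 ^ 2)⁻¹ * HK f (k + 2) p y)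

lemma integrable_gauss_aux (a c x₀ : ℝ) (hc : 0 < c) :
    Integrable (fun z : ℝ => Real.exp (a * |z - x₀| - c * (z - x₀) ^ 2)) := by
  have h1 : Integrable (fun z : ℝ =>
      Real.exp (a ^ 2 / (2 * c)) * Real.exp (-(c / 2) * (z - x₀) ^ 2)) :=
    ((integrable_exp_neg_mul_sq (by linarith : (0:ℝ) < c / 2)).comp_sub_right x₀).const_mul _
  refine h1.mono' (Continuous.aestronglyMeasurable (by fun_prop)) ?_
  filter_upwards with z
  rw [Real.norm_eq_abs, Real.abs_exp, ← Real.exp_add]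
  apply Real.exp_le_exp.mpr
  have h4 : a * |z - x₀| ≤ (a ^ 2 + c ^ 2 * (z - x₀) ^ 2) / (2 * c) := by
    rw [le_div_iff₀ (by linarith : (0:ℝ) < 2 * c)]
    nlinarith [sq_nonneg (a - c * |z - x₀|), sq_abs (z - x₀)]
  have h5 : (a ^ 2 + c ^ 2 * (z - x₀) ^ 2) / (2 * c) =
      a ^ 2 / (2 * c) + (c / 2) * (z - x₀) ^ 2 := by
    field_simp
  linarith [h4, h5.le]

lemma abs_pow_le_exp (w : ℝ) (m : ℕ) : |w| ^ m ≤ Real.exp ((m : ℝ) * |w|) := by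
  calc |w| ^ m ≤ Real.exp |w| ^ m := by
        apply pow_le_pow_left₀ (abs_nonneg w)
        linarith [Real.add_one_le_exp |w|]
    _ = Real.exp ((m : ℝ) * |w|) := by rw [← Real.exp_nat_mul]

lemma poly_gauss_bound (m : ℕ) {x t q1 q2 y : ℝ} (ht : 0 < t) (h1 : |q1 - x| ≤ 1)
    (h2 : t / 2 ≤ q2) (h3 : q2 ≤ 3 * t / 2) :
    |y - q1| ^ m * Real.exp (-(y - q1) ^ 2 / (4 * q2)) ≤
      Real.exp (1 / (2 * t)) * Real.exp ((m : ℝ) * |y - x| - (12 * t)⁻¹ * (y - x) ^ 2) := by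
  have hq2 : 0 < q2 := lt_of_lt_of_le (by linarith) h2
  have hd : (q1 - x) ^ 2 ≤ 1 := by nlinarith [sq_abs (q1 - x), abs_nonneg (q1 - x)]
  have e1 : |y - q1| ^ m ≤ Real.exp ((m : ℝ) * |y - x|) := by
    have h0 : |y - q1| ≤ 1 + |y - x| := by
      have h0' := abs_sub_le y x q1
      have h0'' : |x - q1| = |q1 - x| := abs_sub_comm x q1
      linarith
    calc |y - q1| ^ m ≤ (1 + |y - x|) ^ m := pow_le_pow_left₀ (abs_nonneg _) h0 m
      _ ≤ Real.exp |y - x| ^ m :=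
          pow_le_pow_left₀ (by positivity) (by linarith [Real.add_one_le_exp |y - x|]) m
      _ = Real.exp ((m : ℝ) * |y - x|) := by rw [← Real.exp_nat_mul]
  have e2 : Real.exp (-(y - q1) ^ 2 / (4 * q2)) ≤
      Real.exp (1 / (2 * t) - (12 * t)⁻¹ * (y - x) ^ 2) := by
    apply Real.exp_le_exp.mpr
    have key : -(y - q1) ^ 2 / (4 * q2) ≤ (6 - (y - x) ^ 2) / (12 * t) := by
      rw [div_le_div_iff₀ (by linarith) (by linarith)]
      nlinarith [mul_nonneg ht.le (sq_nonneg (y - x - 2 * (q1 - x))),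
        mul_nonneg (by linarith : (0:ℝ) ≤ 6 * t - 4 * q2) (sq_nonneg (y - x)),
        mul_nonneg ht.le (by linarith : (0:ℝ) ≤ 1 - (q1 - x) ^ 2)]
    have heq : (6 - (y - x) ^ 2) / (12 * t) = 1 / (2 * t) - (12 * t)⁻¹ * (y - x) ^ 2 := by
      field_simp; ring
    linarith [key, heq.le]
  calc |y - q1| ^ m * Real.exp (-(y - q1) ^ 2 / (4 * q2))
      ≤ Real.exp ((m : ℝ) * |y - x|) * Real.exp (1 / (2 * t) - (12 * t)⁻¹ * (y - x) ^ 2) :=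
        mul_le_mul e1 e2 (Real.exp_pos _).le (Real.exp_nonneg _)
    _ = _ := by rw [← Real.exp_add, ← Real.exp_add]; ring_nf

variable {f : ℝ → ℝ} {C : ℝ}

lemma integrable_HK (hf : Continuous f) (hC : ∀ x, |f x| ≤ C) (k : ℕ) {p : ℝ × ℝ}
    (hp : 0 < p.2) : Integrable (fun y => HK f k p y) := by
  have hC0 : 0 ≤ C := le_trans (abs_nonneg _) (hC 0)
  have hmeas : AEStronglyMeasurable (fun y => HK f k p y) volume := by
    apply Continuous.aestronglyMeasurable
    unfold HK; fun_prop
  refine ((integrable_gauss_aux (k : ℝ) (4 * p.2)⁻¹ p.1 (by positivity)).const_mul C).mono'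
    hmeas ?_
  filter_upwards with y
  rw [Real.norm_eq_abs]
  unfold HK
  rw [abs_mul, abs_mul, abs_pow, Real.abs_exp]
  have h1 : |y - p.1| ^ k * Real.exp (-(y - p.1) ^ 2 / (4 * p.2)) ≤
      Real.exp ((k : ℝ) * |y - p.1| - (4 * p.2)⁻¹ * (y - p.1) ^ 2) := by
    calc |y - p.1| ^ k * Real.exp (-(y - p.1) ^ 2 / (4 * p.2))
        ≤ Real.exp ((k : ℝ) * |y - p.1|) * Real.exp (-(y - p.1) ^ 2 / (4 * p.2)) :=
          mul_le_mul_of_nonneg_right (abs_pow_le_exp _ k) (Real.exp_nonneg _)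
      _ = _ := by rw [← Real.exp_add]; congr 1; ring
  exact mul_le_mul (hC y) h1 (by positivity) hC0

lemma abs_HK_le (hC : ∀ x, |f x| ≤ C) (m : ℕ) {p q : ℝ × ℝ} (hp : 0 < p.2)
    (h1 : |q.1 - p.1| ≤ 1) (h2 : p.2 / 2 ≤ q.2) (h3 : q.2 ≤ 3 * p.2 / 2) (y : ℝ) :
    |HK f m q y| ≤
      C * (Real.exp (1 / (2 * p.2)) *
        Real.exp ((m : ℝ) * |y - p.1| - (12 * p.2)⁻¹ * (y - p.1) ^ 2)) := by
  have hC0 : 0 ≤ C := le_trans (abs_nonneg _) (hC 0)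
  unfold HK
  rw [abs_mul, abs_mul, abs_pow, Real.abs_exp]
  exact mul_le_mul (hC y) (poly_gauss_bound m hp h1 h2 h3) (by positivity) hC0

lemma hasFDerivAt_HK (k : ℕ) (y : ℝ) {p : ℝ × ℝ} (hp : 0 < p.2) :
    HasFDerivAt (fun q => HK f k q y) (DH f k p y) p := by
  have h4p : (0:ℝ) < 4 * p.2 := by linarith
  have h1 : HasFDerivAt (fun q : ℝ × ℝ => y - q.1) (-(ContinuousLinearMap.fst ℝ ℝ ℝ)) p :=
    (hasFDerivAt_fst).const_sub y
  have hpow := (hasDerivAt_pow k (y - p.1)).comp_hasFDerivAt p h1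
  have hnum := ((hasDerivAt_pow 2 (y - p.1)).comp_hasFDerivAt p h1).neg
  have hden : HasFDerivAt (fun q : ℝ × ℝ => 4 * q.2)
      ((4:ℝ) • (ContinuousLinearMap.snd ℝ ℝ ℝ)) p := (hasFDerivAt_snd).const_mul 4
  have hinv := (hasDerivAt_inv h4p.ne').comp_hasFDerivAt p hden
  have hfrac := hnum.mul hinv
  have hexp := (Real.hasDerivAt_exp _).comp_hasFDerivAt p hfrac
  have hmul := hpow.mul hexp
  have hfin := hmul.const_mul (f y)
  apply hfin.congr_fderiv
  refine ContinuousLinearMap.ext fun v => ?_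
  unfold DH HK
  simp only [ContinuousLinearMap.add_apply, ContinuousLinearMap.smulRight_apply,
    ContinuousLinearMap.coe_fst', ContinuousLinearMap.coe_snd',
    ContinuousLinearMap.smul_apply, ContinuousLinearMap.neg_apply, smul_eq_mul,
    ContinuousLinearMap.coe_smul', Pi.smul_apply, Function.comp_apply, Function.comp]
  norm_num
  have hpne : p.2 ≠ 0 := hp.ne'
  field_simp
  ring

lemma hasFDerivAt_VV (hf : Continuous f) (hC : ∀ x, |f x| ≤ C) (k : ℕ) {p : ℝ × ℝ}
    (hp : 0 < p.2) : HasFDerivAt (VV f k) (DV f k p) p := by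
  classical
  have hC0 : 0 ≤ C := le_trans (abs_nonneg _) (hC 0)
  set ε : ℝ := min 1 (p.2 / 2) with hεdef
  have hε0 : 0 < ε := lt_min one_pos (by linarith)
  have hball : ∀ q ∈ ball p ε, |q.1 - p.1| ≤ 1 ∧ p.2 / 2 ≤ q.2 ∧ q.2 ≤ 3 * p.2 / 2 ∧ 0 < q.2 := by
    intro q hq
    rw [mem_ball, Prod.dist_eq, max_lt_iff, Real.dist_eq, Real.dist_eq] at hq
    have hq1 : |q.1 - p.1| < 1 := lt_of_lt_of_le hq.1 (min_le_left _ _)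
    have hq2 : |q.2 - p.2| < p.2 / 2 := lt_of_lt_of_le hq.2 (min_le_right _ _)
    rw [abs_lt] at hq2
    exact ⟨hq1.le, by linarith [hq2.1], by linarith [hq2.2], by linarith [hq2.1]⟩
  set bnd : ℝ → ℝ := fun y =>
    (C * ((k : ℝ) + (p.2)⁻¹ + (p.2 ^ 2)⁻¹) * Real.exp (1 / (2 * p.2))) *
      Real.exp (((k : ℝ) + 2) * |y - p.1| - (12 * p.2)⁻¹ * (y - p.1) ^ 2) with hbnd
  have hDnorm : ∀ q ∈ ball p ε, ∀ y, ‖DH f k q y‖ ≤ bnd y := by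
    intro q hq y
    obtain ⟨h1, h2, h3, hq2⟩ := hball q hq
    set X : ℝ := Real.exp (1 / (2 * p.2)) *
      Real.exp (((k : ℝ) + 2) * |y - p.1| - (12 * p.2)⁻¹ * (y - p.1) ^ 2) with hX
    have hXnn : 0 ≤ X := by positivity
    have hHK : ∀ m : ℕ, (m : ℝ) ≤ (k : ℝ) + 2 → |HK f m q y| ≤ C * X := by
      intro m hm
      refine (abs_HK_le hC m hp h1 h2 h3 y).trans ?_
      rw [hX]
      have hmono : Real.exp ((m : ℝ) * |y - p.1| - (12 * p.2)⁻¹ * (y - p.1) ^ 2) ≤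
          Real.exp (((k : ℝ) + 2) * |y - p.1| - (12 * p.2)⁻¹ * (y - p.1) ^ 2) := by
        apply Real.exp_le_exp.mpr
        nlinarith [mul_le_mul_of_nonneg_right hm (abs_nonneg (y - p.1))]
      exact mul_le_mul_of_nonneg_left
        (mul_le_mul_of_nonneg_left hmono (Real.exp_nonneg _)) hC0
    have hcoef1 : (2 * q.2)⁻¹ ≤ (p.2)⁻¹ := inv_anti₀ hp (by linarith)
    have hcoef2 : (4 * q.2 ^ 2)⁻¹ ≤ (p.2 ^ 2)⁻¹ :=
      inv_anti₀ (by positivity) (by nlinarith)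
    have habs1 : |(-(k:ℝ) * HK f (k-1) q y + (2*q.2)⁻¹ * HK f (k+1) q y)| ≤
        (k:ℝ) * (C * X) + (p.2)⁻¹ * (C * X) := by
      refine (abs_add_le _ _).trans ?_
      rw [abs_mul, abs_mul, abs_neg, Nat.abs_cast,
        abs_of_nonneg (by positivity : (0:ℝ) ≤ (2*q.2)⁻¹)]
      have e1 : |HK f (k-1) q y| ≤ C * X := by
        apply hHK
        have := (Nat.cast_le (α := ℝ)).mpr (Nat.sub_le k 1)
        linarith
      have e2 : |HK f (k+1) q y| ≤ C * X := by
        apply hHK; push_cast; linarith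
      have t1 : (k:ℝ) * |HK f (k-1) q y| ≤ (k:ℝ) * (C * X) :=
        mul_le_mul_of_nonneg_left e1 (Nat.cast_nonneg k)
      have t2 : (2*q.2)⁻¹ * |HK f (k+1) q y| ≤ (p.2)⁻¹ * (C * X) :=
        mul_le_mul hcoef1 e2 (abs_nonneg _) (by positivity)
      linarith
    have habs2 : |(4*q.2^2)⁻¹ * HK f (k+2) q y| ≤ (p.2^2)⁻¹ * (C * X) := by
      rw [abs_mul, abs_of_nonneg (by positivity : (0:ℝ) ≤ (4*q.2^2)⁻¹)]
      refine mul_le_mul hcoef2 (hHK (k+2) (by push_cast; linarith)) (abs_nonneg _) (by positivity)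
    have hbndX : (k:ℝ) * (C * X) + (p.2)⁻¹ * (C * X) + (p.2^2)⁻¹ * (C * X) = bnd y := by
      rw [hbnd, hX]; ring
    unfold DH
    refine (norm_add_le _ _).trans ?_
    rw [norm_smulRight_apply, norm_smulRight_apply, Real.norm_eq_abs, Real.norm_eq_abs]
    have hn1 : ‖ContinuousLinearMap.fst ℝ ℝ ℝ‖ *
        |(-(k:ℝ) * HK f (k-1) q y + (2*q.2)⁻¹ * HK f (k+1) q y)| ≤
        (k:ℝ) * (C * X) + (p.2)⁻¹ * (C * X) := by
      refine le_trans (mul_le_of_le_one_left (abs_nonneg _) (ContinuousLinearMap.norm_fst_le ℝ ℝ ℝ)) habs1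
    have hn2 : ‖ContinuousLinearMap.snd ℝ ℝ ℝ‖ * |(4*q.2^2)⁻¹ * HK f (k+2) q y| ≤
        (p.2^2)⁻¹ * (C * X) := by
      refine le_trans (mul_le_of_le_one_left (abs_nonneg _) (ContinuousLinearMap.norm_snd_le ℝ ℝ ℝ)) habs2
    linarith
  have key := hasFDerivAt_integral_of_dominated_loc_of_lip
    (F := fun (q : ℝ × ℝ) (y : ℝ) => HK f k q y) (F' := fun y => DH f k p y)
    (bound := bnd) (μ := volume) (x₀ := p) (Metric.ball_mem_nhds p hε0)
    (Eventually.of_forall fun q =>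
      (Continuous.aestronglyMeasurable (by unfold HK; fun_prop)))
    (integrable_HK hf hC k hp)
    ?_ ?_ ?_ ?_
  · have hswap : (∫ y : ℝ, DH f k p y) = DV f k p := by
      have iA : Integrable (fun y => -(k:ℝ) * HK f (k-1) p y + (2*p.2)⁻¹ * HK f (k+1) p y) :=
        ((integrable_HK hf hC (k-1) hp).const_mul _).add
          ((integrable_HK hf hC (k+1) hp).const_mul _)
      have iB : Integrable (fun y => (4*p.2^2)⁻¹ * HK f (k+2) p y) :=
        (integrable_HK hf hC (k+2) hp).const_mul _
      have e1 : (∫ y : ℝ, (ContinuousLinearMap.fst ℝ ℝ ℝ).smulRight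
          (-(k:ℝ) * HK f (k-1) p y + (2*p.2)⁻¹ * HK f (k+1) p y)) =
          (ContinuousLinearMap.fst ℝ ℝ ℝ).smulRight (∫ y : ℝ,
            (-(k:ℝ) * HK f (k-1) p y + (2*p.2)⁻¹ * HK f (k+1) p y)) :=
        ContinuousLinearMap.integral_comp_comm
          (smulRightL ℝ (ℝ × ℝ) ℝ (ContinuousLinearMap.fst ℝ ℝ ℝ)) iA
      have e2 : (∫ y : ℝ, (ContinuousLinearMap.snd ℝ ℝ ℝ).smulRight
          ((4*p.2^2)⁻¹ * HK f (k+2) p y)) =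
          (ContinuousLinearMap.snd ℝ ℝ ℝ).smulRight
            (∫ y : ℝ, (4*p.2^2)⁻¹ * HK f (k+2) p y) :=
        ContinuousLinearMap.integral_comp_comm
          (smulRightL ℝ (ℝ × ℝ) ℝ (ContinuousLinearMap.snd ℝ ℝ ℝ)) iB
      have eA : (∫ y : ℝ, (-(k:ℝ) * HK f (k-1) p y + (2*p.2)⁻¹ * HK f (k+1) p y)) =
          -(k:ℝ) * VV f (k-1) p + (2*p.2)⁻¹ * VV f (k+1) p := by
        rw [integral_add ((integrable_HK hf hC (k-1) hp).const_mul _)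
          ((integrable_HK hf hC (k+1) hp).const_mul _), integral_const_mul, integral_const_mul]
        rfl
      have eB : (∫ y : ℝ, (4*p.2^2)⁻¹ * HK f (k+2) p y) = (4*p.2^2)⁻¹ * VV f (k+2) p := by
        rw [integral_const_mul]; rfl
      have iA' : Integrable (fun y : ℝ => (ContinuousLinearMap.fst ℝ ℝ ℝ).smulRight
          (-(k:ℝ) * HK f (k-1) p y + (2*p.2)⁻¹ * HK f (k+1) p y)) volume :=
        (smulRightL ℝ (ℝ × ℝ) ℝ (ContinuousLinearMap.fst ℝ ℝ ℝ)).integrable_comp iA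
      have iB' : Integrable (fun y : ℝ => (ContinuousLinearMap.snd ℝ ℝ ℝ).smulRight
          ((4*p.2^2)⁻¹ * HK f (k+2) p y)) volume :=
        (smulRightL ℝ (ℝ × ℝ) ℝ (ContinuousLinearMap.snd ℝ ℝ ℝ)).integrable_comp iB
      unfold DH DV
      rw [integral_add iA' iB', e1, e2, eA, eB]
    exact key.2.congr_fderiv hswap
  · exact (Continuous.aestronglyMeasurable (by
      unfold DH
      refine Continuous.add ?_ ?_
      · exact (smulRightL ℝ (ℝ × ℝ) ℝ (ContinuousLinearMap.fst ℝ ℝ ℝ)).continuous.comp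
          (by unfold HK; fun_prop)
      · exact (smulRightL ℝ (ℝ × ℝ) ℝ (ContinuousLinearMap.snd ℝ ℝ ℝ)).continuous.comp
          (by unfold HK; fun_prop)))
  · filter_upwards with y
    apply (convex_ball p ε).lipschitzOnWith_of_nnnorm_hasFDerivWithin_le
      (f' := fun q => DH f k q y)
      (fun q hq => (hasFDerivAt_HK k y (hball q hq).2.2.2).hasFDerivWithinAt)
    intro q hq
    rw [← NNReal.coe_le_coe, coe_nnnorm, Real.coe_nnabs]
    exact le_trans (hDnorm q hq y) (le_abs_self _)
  · exact (integrable_gauss_aux ((k:ℝ)+2) (12*p.2)⁻¹ p.1 (by positivity)).const_mul _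
  · filter_upwards with y
    exact hasFDerivAt_HK k y hp

lemma contDiffOn_VV (hf : Continuous f) (hC : ∀ x, |f x| ≤ C) (n : ℕ) : ∀ k : ℕ,
    ContDiffOn ℝ n (VV f k) (Set.univ ×ˢ Set.Ioi (0 : ℝ)) := by
  induction n with
  | zero =>
    intro k
    rw [show ((0:ℕ) : WithTop ℕ∞) = 0 from rfl, contDiffOn_zero]
    intro q hq
    exact ((hasFDerivAt_VV hf hC k hq.2).differentiableAt.continuousAt).continuousWithinAt
  | succ n ih =>
    intro k
    have hopen : IsOpen ((Set.univ : Set ℝ) ×ˢ Set.Ioi (0:ℝ)) := isOpen_univ.prod isOpen_Ioi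
    have hcast : ((n+1:ℕ) : WithTop ℕ∞) = (n : WithTop ℕ∞) + 1 := by norm_cast
    rw [hcast, contDiffOn_succ_iff_fderiv_of_isOpen hopen]
    refine ⟨fun q hq =>
      (hasFDerivAt_VV hf hC k hq.2).differentiableAt.differentiableWithinAt, ?_, ?_⟩
    · intro h; simp at h
    · have hinv1 : ContDiffOn ℝ n (fun q : ℝ×ℝ => (2*q.2)⁻¹) (Set.univ ×ˢ Set.Ioi (0:ℝ)) :=
        ((contDiff_const.mul contDiff_snd).contDiffOn).inv
          (fun q hq => by { have : (0:ℝ) < q.2 := hq.2; positivity })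
      have hinv2 : ContDiffOn ℝ n (fun q : ℝ×ℝ => (4*q.2^2)⁻¹) (Set.univ ×ˢ Set.Ioi (0:ℝ)) := by
        refine ((contDiff_const.mul (contDiff_snd.pow 2)).contDiffOn).inv (fun q hq => ?_)
        have : (0:ℝ) < q.2 := hq.2
        positivity
      have hA : ContDiffOn ℝ n
          (fun q : ℝ×ℝ => -(k:ℝ) * VV f (k-1) q + (2*q.2)⁻¹ * VV f (k+1) q)
          (Set.univ ×ˢ Set.Ioi (0:ℝ)) :=
        (contDiffOn_const.mul (ih (k-1))).add (hinv1.mul (ih (k+1)))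
      have hB : ContDiffOn ℝ n (fun q : ℝ×ℝ => (4*q.2^2)⁻¹ * VV f (k+2) q)
          (Set.univ ×ˢ Set.Ioi (0:ℝ)) := hinv2.mul (ih (k+2))
      have hDV : ContDiffOn ℝ n (fun q => DV f k q) (Set.univ ×ˢ Set.Ioi (0:ℝ)) := by
        unfold DV
        exact (((smulRightL ℝ (ℝ × ℝ) ℝ (ContinuousLinearMap.fst ℝ ℝ ℝ)).contDiff.comp_contDiffOn
          hA)).add
          ((smulRightL ℝ (ℝ × ℝ) ℝ (ContinuousLinearMap.snd ℝ ℝ ℝ)).contDiff.comp_contDiffOn hB)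
      exact hDV.congr fun q hq => (hasFDerivAt_VV hf hC k hq.2).fderiv

end HeatAux

/-- **Solution of the heat equation via the heat kernel.** For `f : ℝ → ℝ` continuous and
bounded, the function `u(x, t) = (4πt)^{-1/2} ∫_ℝ f(y) exp (-(y - x)² / (4t)) dy` is infinitely
differentiable on `ℝ × (0, ∞)`, satisfies the heat equation `∂u/∂t = ∂²u/∂x²` there, and
`u(x, t) → f(x)` as `t → 0⁺` for every `x`. -/
theorem heat_equation_classical_solution
    (f : ℝ → ℝ) (hf : Continuous f) (hfb : ∃ C : ℝ, ∀ x, |f x| ≤ C)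
    (u : ℝ → ℝ → ℝ)
    (hu : ∀ (x : ℝ) (t : ℝ), 0 < t →
      u x t = (Real.sqrt (4 * Real.pi * t))⁻¹ *
        ∫ y : ℝ, f y * Real.exp (-(y - x) ^ 2 / (4 * t))) :
    ContDiffOn ℝ (⊤ : ℕ∞) (fun p : ℝ × ℝ => u p.1 p.2) (Set.univ ×ˢ Set.Ioi (0 : ℝ)) ∧
    (∀ (x : ℝ) (t : ℝ), 0 < t →
      deriv (fun s : ℝ => u x s) t = deriv (deriv fun z : ℝ => u z t) x) ∧
    (∀ x : ℝ, Tendsto (fun t : ℝ => u x t) (nhdsWithin 0 (Set.Ioi 0)) (nhds (f x))) := by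
  obtain ⟨C, hC⟩ := hfb
  have hC0 : 0 ≤ C := le_trans (abs_nonneg _) (hC 0)
  have hueq : ∀ p : ℝ × ℝ, 0 < p.2 →
      u p.1 p.2 = (Real.sqrt (4 * Real.pi * p.2))⁻¹ * HeatAux.VV f 0 p := by
    intro p hp
    rw [hu p.1 p.2 hp]
    congr 1
    unfold HeatAux.VV HeatAux.HK
    simp only [pow_zero, one_mul]
  refine ⟨?_, ?_, ?_⟩
  · -- smoothness
    have hsqrt : ContDiffOn ℝ (⊤ : ℕ∞) (fun p : ℝ × ℝ => (Real.sqrt (4 * Real.pi * p.2))⁻¹)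
        (Set.univ ×ˢ Set.Ioi (0:ℝ)) := by
      refine ContDiffOn.inv ?_ ?_
      · refine ContDiffOn.sqrt ((contDiff_const.mul contDiff_snd).contDiffOn) (fun p hp => ?_)
        have h2 : (0:ℝ) < p.2 := hp.2
        positivity
      · intro p hp
        have h2 : (0:ℝ) < p.2 := hp.2
        have : (0:ℝ) < Real.sqrt (4 * Real.pi * p.2) := Real.sqrt_pos.2 (by positivity)
        exact this.ne'
    have hV : ContDiffOn ℝ (⊤ : ℕ∞) (HeatAux.VV f 0) (Set.univ ×ˢ Set.Ioi (0:ℝ)) := by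
      apply contDiffOn_infty.mpr
      intro n
      exact HeatAux.contDiffOn_VV hf hC n 0
    exact (hsqrt.mul hV).congr fun p hp => hueq p hp.2
  · -- heat equation
    intro x t ht
    set s0 : ℝ := Real.sqrt (4 * Real.pi * t) with hs0
    have hs0pos : 0 < s0 := Real.sqrt_pos.2 (by positivity)
    have hsqs : s0 ^ 2 = 4 * Real.pi * t := Real.sq_sqrt (by positivity)
    have hVt : ∀ k : ℕ, HasDerivAt (fun s : ℝ => HeatAux.VV f k (x, s))
        ((4 * t ^ 2)⁻¹ * HeatAux.VV f (k + 2) (x, t)) t := by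
      intro k
      have hcurve : HasDerivAt (fun s : ℝ => ((x, s) : ℝ × ℝ)) (((0:ℝ), (1:ℝ)) : ℝ × ℝ) t :=
        (hasDerivAt_const t x).prodMk (hasDerivAt_id t)
      have h := (HeatAux.hasFDerivAt_VV hf hC k (p := (x, t)) ht).comp_hasDerivAt t hcurve
      refine h.congr_deriv ?_
      unfold HeatAux.DV
      simp
    have hVx : ∀ k : ℕ, ∀ z : ℝ, HasDerivAt (fun w : ℝ => HeatAux.VV f k (w, t))
        (-(k:ℝ) * HeatAux.VV f (k-1) (z, t) + (2*t)⁻¹ * HeatAux.VV f (k+1) (z, t)) z := by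
      intro k z
      have hcurve : HasDerivAt (fun w : ℝ => ((w, t) : ℝ × ℝ)) (((1:ℝ), (0:ℝ)) : ℝ × ℝ) z :=
        (hasDerivAt_id z).prodMk (hasDerivAt_const z t)
      have h := (HeatAux.hasFDerivAt_VV hf hC k (p := (z, t)) ht).comp_hasDerivAt z hcurve
      refine h.congr_deriv ?_
      unfold HeatAux.DV
      simp
    have hcd : HasDerivAt (fun s : ℝ => (Real.sqrt (4 * Real.pi * s))⁻¹)
        (-(1 / (2 * s0) * (4 * Real.pi)) / s0 ^ 2) t := by
      have h1 : HasDerivAt (fun s : ℝ => 4 * Real.pi * s) (4 * Real.pi) t := by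
        simpa using (hasDerivAt_id t).const_mul (4 * Real.pi)
      have h2 := (Real.hasDerivAt_sqrt (by positivity : 4 * Real.pi * t ≠ 0)).comp t h1
      have h3 := h2.inv hs0pos.ne'
      exact h3
    have hLHS : deriv (fun s : ℝ => u x s) t =
        (-(1 / (2 * s0) * (4 * Real.pi)) / s0 ^ 2) * HeatAux.VV f 0 (x, t) +
        s0⁻¹ * ((4 * t ^ 2)⁻¹ * HeatAux.VV f 2 (x, t)) := by
      have hev : (fun s : ℝ => u x s) =ᶠ[nhds t]
          (fun s : ℝ => (Real.sqrt (4 * Real.pi * s))⁻¹ * HeatAux.VV f 0 (x, s)) := by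
        filter_upwards [Ioi_mem_nhds ht] with s hs
        exact hueq (x, s) hs
      rw [hev.deriv_eq]
      exact (hcd.mul (hVt 0)).deriv
    have hfun : (fun z : ℝ => u z t) =
        fun z : ℝ => (Real.sqrt (4 * Real.pi * t))⁻¹ * HeatAux.VV f 0 (z, t) :=
      funext fun z => hueq (z, t) ht
    have hderiv1 : (deriv fun z : ℝ => u z t) = fun z : ℝ =>
        (Real.sqrt (4 * Real.pi * t))⁻¹ * ((2*t)⁻¹ * HeatAux.VV f 1 (z, t)) := by
      rw [hfun]
      funext z
      have h := ((hVx 0 z).const_mul ((Real.sqrt (4 * Real.pi * t))⁻¹)).deriv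
      rw [h]
      norm_num
    have hd2 := ((hVx 1 x).const_mul ((2*t)⁻¹)).const_mul ((Real.sqrt (4 * Real.pi * t))⁻¹)
    rw [hLHS, hderiv1, hd2.deriv]
    have h10 : (1:ℕ) - 1 = 0 := rfl
    rw [h10]
    push_cast
    have hkey : -(1 / (2 * s0) * (4 * Real.pi)) / s0 ^ 2 = -(s0⁻¹ / (2*t)) := by
      rw [hsqs]
      field_simp
    rw [hkey]
    ring
  · -- initial condition
    intro x
    have hsqrtpi : (0:ℝ) < Real.sqrt Real.pi := Real.sqrt_pos.2 Real.pi_pos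
    have hkey : ∀ t : ℝ, 0 < t → u x t =
        (Real.sqrt Real.pi)⁻¹ * ∫ z : ℝ, f (x + 2 * Real.sqrt t * z) * Real.exp (-z ^ 2) := by
      intro t ht
      rw [hu x t ht]
      have hst : 0 < Real.sqrt t := Real.sqrt_pos.2 ht
      have hchg : (∫ y : ℝ, f y * Real.exp (-(y - x) ^ 2 / (4 * t))) =
          (2 * Real.sqrt t) * ∫ z : ℝ, f (x + 2 * Real.sqrt t * z) * Real.exp (-z ^ 2) := by
        have h1 := MeasureTheory.Measure.integral_comp_mul_left
          (fun y' : ℝ => f (x + y') * Real.exp (-y' ^ 2 / (4 * t))) (2 * Real.sqrt t)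
        have h2 : (∫ y' : ℝ, f (x + y') * Real.exp (-y' ^ 2 / (4 * t))) =
            ∫ y : ℝ, f y * Real.exp (-(y - x) ^ 2 / (4 * t)) := by
          rw [← MeasureTheory.integral_add_right_eq_self
            (fun y : ℝ => f y * Real.exp (-(y - x) ^ 2 / (4 * t))) x]
          congr 1
          funext y'
          have e1 : y' + x - x = y' := by ring
          rw [e1, add_comm x y']
        have h3 : (∫ z : ℝ, (fun y' : ℝ => f (x + y') * Real.exp (-y' ^ 2 / (4 * t)))
            (2 * Real.sqrt t * z)) =
            ∫ z : ℝ, f (x + 2 * Real.sqrt t * z) * Real.exp (-z ^ 2) := by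
          congr 1
          funext z
          have e2 : -(2 * Real.sqrt t * z) ^ 2 / (4 * t) = -z ^ 2 := by
            rw [mul_pow, mul_pow, Real.sq_sqrt ht.le]
            field_simp
            ring
          simp only []
          rw [e2]
        rw [h3] at h1
        rw [h2] at h1
        rw [h1]
        rw [abs_of_pos (by positivity : (0:ℝ) < (2 * Real.sqrt t)⁻¹), smul_eq_mul]
        field_simp
      rw [hchg]
      have hsplit : Real.sqrt (4 * Real.pi * t) = 2 * Real.sqrt Real.pi * Real.sqrt t := by
        rw [Real.sqrt_mul (by positivity : (0:ℝ) ≤ 4 * Real.pi) t,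
          Real.sqrt_mul (by norm_num : (0:ℝ) ≤ 4) Real.pi,
          show Real.sqrt 4 = 2 by
            rw [show (4:ℝ) = 2 ^ 2 by norm_num]
            exact Real.sqrt_sq (by norm_num)]
      rw [hsplit]
      field_simp
    have hJ : Tendsto (fun t : ℝ => ∫ z : ℝ, f (x + 2 * Real.sqrt t * z) * Real.exp (-z ^ 2))
        (nhdsWithin 0 (Set.Ioi 0)) (nhds (∫ z : ℝ, f x * Real.exp (-z ^ 2))) := by
      apply tendsto_integral_filter_of_dominated_convergence (fun z => C * Real.exp (-z ^ 2))
      · filter_upwards with t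
        exact ((hf.comp (by fun_prop : Continuous fun z : ℝ => x + 2 * Real.sqrt t * z)).mul
          (by fun_prop)).aestronglyMeasurable
      · filter_upwards with t
        filter_upwards with z
        rw [Real.norm_eq_abs, abs_mul, Real.abs_exp]
        exact mul_le_mul_of_nonneg_right (hC _) (Real.exp_nonneg _)
      · simpa using (integrable_exp_neg_mul_sq (one_pos)).const_mul C
      · filter_upwards with z
        have harg : Tendsto (fun t : ℝ => x + 2 * Real.sqrt t * z)
            (nhdsWithin 0 (Set.Ioi 0)) (nhds x) := by
          have hcont : Continuous fun t : ℝ => x + 2 * Real.sqrt t * z := by fun_prop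
          have h0 := hcont.tendsto 0
          rw [show x + 2 * Real.sqrt 0 * z = x by simp] at h0
          exact h0.mono_left nhdsWithin_le_nhds
        exact ((hf.tendsto x).comp harg).mul_const _
    have hlim : (∫ z : ℝ, f x * Real.exp (-z ^ 2)) = f x * Real.sqrt Real.pi := by
      rw [MeasureTheory.integral_const_mul]
      congr 1
      simpa using integral_gaussian 1
    have T := hJ.const_mul ((Real.sqrt Real.pi)⁻¹)
    rw [hlim] at T
    have heq : (Real.sqrt Real.pi)⁻¹ * (f x * Real.sqrt Real.pi) = f x := by
      field_simp
    rw [heq] at T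
    refine T.congr' ?_
    filter_upwards [self_mem_nhdsWithin] with t ht
    exact (hkey t ht).symm
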